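/- Let L be a finite field with char(L) ≠ 2, and let Ḡ be the subgroup of GL(2, L) generated by the matrix S₀ = [[0,1],[1,0]] together with all matrices [[1,b],[0,1]] with b ∈ L, b ≠ 0. Then Ḡ is the internal semidirect product of SL(2, L) by ⟨S₀⟩: SL(2, L) is a normal subgroup of Ḡ, S₀ ∈ Ḡ has order 2 and S₀ ∉ SL(2, L), SL(2, L) ∩ ⟨S₀⟩ is trivial, and every element of Ḡ can be written as A·S₀^ε with A ∈ SL(2, L) and ε ∈ {0, 1}. -/

import Mathlib

/-- The permutation matrix `S₀ = [[0,1],[1,0]]` as an element of `GL(2, L)`. -/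
def swapGL (L : Type*) [Field L] : GL (Fin 2) L :=
  ⟨!![0, 1; 1, 0], !![0, 1; 1, 0],
    by simp [Matrix.mul_fin_two, Matrix.one_fin_two],
    by simp [Matrix.mul_fin_two, Matrix.one_fin_two]⟩

/-- The transvection `[[1,b],[0,1]]` as an element of `GL(2, L)`. -/
def transvGL {L : Type*} [Field L] (b : L) : GL (Fin 2) L :=
  ⟨!![1, b; 0, 1], !![1, -b; 0, 1],
    by simp [Matrix.mul_fin_two, Matrix.one_fin_two],
    by simp [Matrix.mul_fin_two, Matrix.one_fin_two]⟩

/-- The subgroup `Ḡ ≤ GL(2, L)` generated by `S₀` and the transvections `[[1,b],[0,1]]`,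
`b ≠ 0`. -/
def Gbar (L : Type*) [Field L] : Subgroup (GL (Fin 2) L) :=
  Subgroup.closure ({swapGL L} ∪ {A | ∃ b : L, b ≠ 0 ∧ A = transvGL b})

/-- The special linear group `SL(2, L) = {A ∈ GL(2, L) : det A = 1}`, as a subgroup of
`GL(2, L)`. -/
def SL2 (L : Type*) [Field L] : Subgroup (GL (Fin 2) L) where
  carrier := {A | Matrix.det (A : Matrix (Fin 2) (Fin 2) L) = 1}
  one_mem' := by simp
  mul_mem' := by
    intro a b ha hb
    simp only [Set.mem_setOf_eq, Units.val_mul, Matrix.det_mul] at *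
    rw [ha, hb, one_mul]
  inv_mem' := by
    intro A hA
    simp only [Set.mem_setOf_eq] at *
    have h : Matrix.det ((A⁻¹ : GL (Fin 2) L) : Matrix (Fin 2) (Fin 2) L)
        * Matrix.det ((A : GL (Fin 2) L) : Matrix (Fin 2) (Fin 2) L) = 1 := by
      rw [← Matrix.det_mul, ← Units.val_mul, inv_mul_cancel A, Units.val_one, Matrix.det_one]
    rw [hA, mul_one] at h
    exact h

section helper
variable {L : Type*} [Field L]

lemma swap_mem : swapGL L ∈ Gbar L :=
  Subgroup.subset_closure (Or.inl rfl)

lemma transv_mem (b : L) : transvGL b ∈ Gbar L := by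
  by_cases hb : b = 0
  · have : transvGL b = 1 := by
      subst hb; apply Units.ext
      show !![(1:L), 0; 0, 1] = 1
      simp [Matrix.one_fin_two]
    rw [this]; exact one_mem _
  · exact Subgroup.subset_closure (Or.inr ⟨b, hb, rfl⟩)

lemma swap_sq : (swapGL L) ^ 2 = 1 := by
  rw [sq]; apply Units.ext
  show (!![(0:L),1;1,0] * !![0,1;1,0] : Matrix _ _ L) = 1
  simp [Matrix.mul_fin_two, Matrix.one_fin_two]

lemma key (A : GL (Fin 2) L) (h : Matrix.det (A : Matrix (Fin 2) (Fin 2) L) = 1) :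
    A ∈ Gbar L := by
  have hA := Matrix.eta_fin_two (A : Matrix (Fin 2) (Fin 2) L)
  set a := (A : Matrix (Fin 2) (Fin 2) L) 0 0 with ha
  set b := (A : Matrix (Fin 2) (Fin 2) L) 0 1 with hb
  set c := (A : Matrix (Fin 2) (Fin 2) L) 1 0 with hc
  set d := (A : Matrix (Fin 2) (Fin 2) L) 1 1 with hd
  have hdet : a * d - b * c = 1 := by
    rw [← Matrix.det_fin_two_of, ← hA]; exact h
  clear_value a b c d
  by_cases hc0 : c = 0
  · have ha0 : a ≠ 0 := by
      intro h0; rw [h0, hc0] at hdet; simp at hdet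
    have : A = (swapGL L * transvGL (-1) * swapGL L) * transvGL ((a-1)/a) *
        (swapGL L * transvGL a * swapGL L) * transvGL ((b+d-1)/a) := by
      apply Units.ext
      show (A : Matrix (Fin 2) (Fin 2) L) = _
      rw [hA]
      show !![a, b; c, d] = (!![(0:L),1;1,0] * !![1,-1;0,1] * !![0,1;1,0]) * !![1,(a-1)/a;0,1] *
          (!![0,1;1,0] * !![1,a;0,1] * !![0,1;1,0]) * !![1,(b+d-1)/a;0,1]
      rw [hc0]
      have hd' : d = a⁻¹ := by
        field_simp
        linear_combination hdet + b*hc0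
      ext i j
      fin_cases i <;> fin_cases j <;>
        simp [Matrix.mul_apply, Fin.sum_univ_two, hd'] <;> field_simp <;> ring
    rw [this]
    exact mul_mem (mul_mem (mul_mem (mul_mem (mul_mem swap_mem (transv_mem _)) swap_mem)
      (transv_mem _)) (mul_mem (mul_mem swap_mem (transv_mem _)) swap_mem)) (transv_mem _)
  · have : A = transvGL ((a-1)/c) * (swapGL L * transvGL c * swapGL L) * transvGL ((d-1)/c) := by
      apply Units.ext
      show (A : Matrix (Fin 2) (Fin 2) L) = _
      rw [hA]
      show !![a, b; c, d] = !![1,(a-1)/c;0,1] * (!![(0:L),1;1,0] * !![1,c;0,1] * !![0,1;1,0]) *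
          !![1,(d-1)/c;0,1]
      ext i j
      fin_cases i <;> fin_cases j <;>
        simp [Matrix.mul_apply, Fin.sum_univ_two] <;> field_simp <;> ring_nf <;> linear_combination -hdet
    rw [this]
    exact mul_mem (mul_mem (transv_mem _) (mul_mem (mul_mem swap_mem (transv_mem _)) swap_mem))
      (transv_mem _)



end helper

section main
variable {L : Type*} [Field L]

lemma mem_SL2_iff (A : GL (Fin 2) L) :
    A ∈ SL2 L ↔ Matrix.det (A : Matrix (Fin 2) (Fin 2) L) = 1 := Iff.rfl

lemma SL2_normal : (SL2 L).Normal := by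
  constructor
  intro n hn g
  rw [mem_SL2_iff] at *
  have h1 : Matrix.det ((g : GL (Fin 2) L) : Matrix (Fin 2) (Fin 2) L) *
      Matrix.det ((g⁻¹ : GL (Fin 2) L) : Matrix (Fin 2) (Fin 2) L) = 1 := by
    rw [← Matrix.det_mul, ← Units.val_mul, mul_inv_cancel g, Units.val_one, Matrix.det_one]
  show Matrix.det (((g * n * g⁻¹ : GL (Fin 2) L)) : Matrix (Fin 2) (Fin 2) L) = 1
  rw [Units.val_mul, Units.val_mul, Matrix.det_mul, Matrix.det_mul, hn, mul_one]
  exact h1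

lemma det_swap : Matrix.det ((swapGL L : GL (Fin 2) L) : Matrix (Fin 2) (Fin 2) L) = -1 := by
  show Matrix.det !![(0:L),1;1,0] = -1
  simp [Matrix.det_fin_two_of]

lemma swap_ne_one : (swapGL L) ≠ 1 := by
  intro h
  have := congrArg (fun u : GL (Fin 2) L => (u : Matrix (Fin 2) (Fin 2) L) 0 0) h
  simp [swapGL] at this

lemma det_pm (g : GL (Fin 2) L) (hg : g ∈ Gbar L) :
    Matrix.det ((g : GL (Fin 2) L) : Matrix (Fin 2) (Fin 2) L) = 1 ∨
    Matrix.det ((g : GL (Fin 2) L) : Matrix (Fin 2) (Fin 2) L) = -1 := by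
  induction hg using Subgroup.closure_induction with
  | mem x hx =>
    rcases hx with hx | ⟨b, _, rfl⟩
    · right; rw [Set.mem_singleton_iff] at hx; rw [hx]; exact det_swap
    · left; show Matrix.det !![(1:L),b;0,1] = 1; simp [Matrix.det_fin_two_of]
  | one => left; simp
  | mul x y _ _ ihx ihy =>
    rw [Units.val_mul, Matrix.det_mul]
    rcases ihx with h | h <;> rcases ihy with h' | h' <;> rw [h, h'] <;> simp
  | inv x _ ihx =>
    have h1 : Matrix.det ((x : GL (Fin 2) L) : Matrix (Fin 2) (Fin 2) L) *
        Matrix.det ((x⁻¹ : GL (Fin 2) L) : Matrix (Fin 2) (Fin 2) L) = 1 := by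
      rw [← Matrix.det_mul, ← Units.val_mul, mul_inv_cancel x, Units.val_one, Matrix.det_one]
    rcases ihx with h | h <;> rw [h] at h1
    · left; linear_combination h1
    · right; linear_combination -h1

end main

/-- For a finite field `L` of characteristic different from `2`, the group
`Ḡ` is the internal semidirect product of `SL(2, L)` by `⟨S₀⟩`: `SL(2, L)` is a normal
subgroup of `Ḡ`, `S₀ ∈ Ḡ` has order `2` and lies outside `SL(2, L)`, the intersection
`SL(2, L) ∩ ⟨S₀⟩` is trivial, and every element of `Ḡ` is of the form `A·S₀^ε` with
`A ∈ SL(2, L)` and `ε ∈ {0, 1}`. -/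
theorem Gbar_eq_SL2_semidirect_swap (L : Type*) [Field L] [Fintype L]
    (hchar : ringChar L ≠ 2) :
    SL2 L ≤ Gbar L
    ∧ ((SL2 L).subgroupOf (Gbar L)).Normal
    ∧ swapGL L ∈ Gbar L
    ∧ orderOf (swapGL L) = 2
    ∧ swapGL L ∉ SL2 L
    ∧ SL2 L ⊓ Subgroup.zpowers (swapGL L) = ⊥
    ∧ ∀ g ∈ Gbar L, ∃ A ∈ SL2 L, ∃ ε : Fin 2, g = A * swapGL L ^ (ε : ℕ) := by
  have hswap_not : swapGL L ∉ SL2 L := by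
    rw [mem_SL2_iff, det_swap]
    intro h
    exact Ring.neg_one_ne_one_of_char_ne_two hchar h
  refine ⟨fun A hA => key A hA, SL2_normal.subgroupOf _, swap_mem, ?_, hswap_not, ?_, ?_⟩
  · exact orderOf_eq_prime swap_sq swap_ne_one
  · rw [eq_bot_iff]
    rintro x ⟨hx1, hx2⟩
    obtain ⟨n, hn⟩ := Subgroup.mem_zpowers_iff.mp hx2
    rw [← hn] at hx1 ⊢
    rcases Int.even_or_odd n with ⟨k, rfl⟩ | ⟨k, rfl⟩
    · have : swapGL L ^ (k + k) = 1 := by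
        rw [← two_mul, zpow_mul, show ((2:ℤ)) = ((2:ℕ):ℤ) by norm_num, zpow_natCast, swap_sq,
          one_zpow]
      rw [this]; exact Subgroup.mem_bot.mpr rfl
    · exfalso
      have : swapGL L ^ (2 * k + 1) = swapGL L := by
        rw [zpow_add, zpow_mul, show ((2:ℤ)) = ((2:ℕ):ℤ) by norm_num, zpow_natCast, swap_sq,
          one_zpow, one_mul, zpow_one]
      rw [this] at hx1
      exact hswap_not hx1
  · intro g hg
    rcases det_pm g hg with h | h
    · exact ⟨g, h, 0, by simp⟩
    · refine ⟨g * swapGL L, ?_, 1, ?_⟩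
      · rw [mem_SL2_iff, Units.val_mul, Matrix.det_mul, h, det_swap]
        ring
      · show g = g * swapGL L * swapGL L ^ ((1 : Fin 2) : ℕ)
        norm_num [mul_assoc, ← sq, swap_sq]
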